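/- Let G be a group, I an ideal of Γ(G) containing N₃, A an abelian group, and σ ∈ pZ²(G,A). Then the set E = (A × (Γ(G) \ I)) ∪ {∞} with multiplication (λ,R,x)·(μ,S,y) = (λ+μ+σ(x,y), R∪xS, xy) if (R∪xS, xy) ∉ I, and ∞ otherwise, is an associative semigroup. -/

import Mathlib

/-- The Birget–Rhodes expansion of a group `G`: pairs `(R, g)` where `R` is a
finite subset of `G` containing `1` and `g`. -/
def BR (G : Type*) [Group G] [DecidableEq G] : Type _ :=
  {p : Finset G × G // (1 : G) ∈ p.1 ∧ p.2 ∈ p.1}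

variable {G : Type*} [Group G] [DecidableEq G]

/-- Multiplication `(R,g)·(S,h) = (R ∪ gS, gh)`. -/
instance : Mul (BR G) :=
  ⟨fun x y =>
    ⟨(x.1.1 ∪ y.1.1.image (x.1.2 * ·), x.1.2 * y.1.2),
      Finset.mem_union_left _ x.2.1,
      Finset.mem_union_right _ (Finset.mem_image_of_mem _ y.2.2)⟩⟩

/-- A two-sided ideal of the Birget–Rhodes expansion. -/
def IsIdeal (I : Set (BR G)) : Prop :=
  ∀ a ∈ I, ∀ s : BR G, s * a ∈ I ∧ a * s ∈ I

/-- The ideal `N₃ = {(R,g) : |R| ≥ 4}`. -/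
def N3 (G : Type*) [Group G] [DecidableEq G] : Set (BR G) :=
  {x : BR G | 4 ≤ x.1.1.card}

variable {A : Type*} [AddCommGroup A]

/-- The coboundary `δ²σ(x,y,z) = σ(y,z) − σ(xy,z) + σ(x,yz) − σ(x,y)`. -/
def d2 (σ : G → G → A) (x y z : G) : A :=
  σ y z - σ (x * y) z + σ x (y * z) - σ x y

/-- A pre-cocycle: `δ²σ(x,y,z) = 0` whenever `1 ∈ {x,y,z,xy,yz,xyz}`. -/
def IsPreCocycle (σ : G → G → A) : Prop :=
  ∀ x y z : G, (1 : G) ∈ ({x, y, z, x * y, y * z, x * y * z} : Set G) →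
    d2 σ x y z = 0

/-- The underlying set `E = (A × (Γ(G) \ I)) ∪ {∞}`, with `none` playing the
role of the zero element `∞`. -/
def Esg (A : Type*) (G : Type*) [Group G] [DecidableEq G] (I : Set (BR G)) :
    Type _ :=
  Option (A × {x : BR G // x ∉ I})

open Classical in
/-- The multiplication `(λ,R,x)·(μ,S,y) = (λ+μ+σ(x,y), R∪xS, xy)` if
`(R∪xS, xy) ∉ I`, and `∞` otherwise. -/
noncomputable def Emul (σ : G → G → A) (I : Set (BR G)) :
    Esg A G I → Esg A G I → Esg A G I
  | some (a, x), some (b, y) =>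
      if h : (x.1 * y.1) ∈ I then none
      else some (a + b + σ x.1.1.2 y.1.1.2, ⟨x.1 * y.1, h⟩)
  | _, _ => none

lemma br_fst (x y : BR G) : (x * y).1.1 = x.1.1 ∪ y.1.1.image (x.1.2 * ·) := rfl

lemma br_snd (x y : BR G) : (x * y).1.2 = x.1.2 * y.1.2 := rfl

lemma br_assoc (x y z : BR G) : x * y * z = x * (y * z) := by
  apply Subtype.ext
  apply Prod.ext
  · show (x * y * z).1.1 = (x * (y * z)).1.1
    simp only [br_fst, br_snd, Finset.image_union, Finset.image_image,
      Finset.union_assoc]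
    congr 1
    ext g
    simp [Function.comp, mul_assoc]
  · show (x * y * z).1.2 = (x * (y * z)).1.2
    simp only [br_snd, mul_assoc]

lemma one_mem_of_card_le (x y z : BR G) (h : ((x * y * z).1.1).card ≤ 3) :
    (1 : G) ∈ ({x.1.2, y.1.2, z.1.2, x.1.2 * y.1.2, y.1.2 * z.1.2,
      x.1.2 * y.1.2 * z.1.2} : Set G) := by
  by_contra hc
  simp only [Set.mem_insert_iff, Set.mem_singleton_iff, not_or] at hc
  obtain ⟨h1, h2, h3, h4, h5, h6⟩ := hc
  set p := x * y * z with hp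
  have m1 : (1 : G) ∈ p.1.1 := p.2.1
  have m2 : x.1.2 ∈ p.1.1 := by
    rw [hp, br_fst, br_fst]
    refine Finset.mem_union_left _ (Finset.mem_union_right _ ?_)
    exact Finset.mem_image.2 ⟨1, y.2.1, by simp⟩
  have m3 : x.1.2 * y.1.2 ∈ p.1.1 := by
    rw [hp, br_fst, br_fst]
    refine Finset.mem_union_left _ (Finset.mem_union_right _ ?_)
    exact Finset.mem_image.2 ⟨y.1.2, y.2.2, rfl⟩
  have m4 : x.1.2 * y.1.2 * z.1.2 ∈ p.1.1 := by
    rw [hp, br_fst]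
    refine Finset.mem_union_right _ ?_
    exact Finset.mem_image.2 ⟨z.1.2, z.2.2, rfl⟩
  have hsub : ({1, x.1.2, x.1.2 * y.1.2, x.1.2 * y.1.2 * z.1.2} : Finset G)
      ⊆ p.1.1 := by
    intro g hg
    simp only [Finset.mem_insert, Finset.mem_singleton] at hg
    rcases hg with rfl | rfl | rfl | rfl
    exacts [m1, m2, m3, m4]
  have e1 : x.1.2 ≠ x.1.2 * y.1.2 := by
    intro e; exact h2 (by rw [eq_comm, mul_eq_left] at e; exact e.symm)
  have e2 : x.1.2 ≠ x.1.2 * y.1.2 * z.1.2 := by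
    intro e
    apply h5
    have : x.1.2 * 1 = x.1.2 * (y.1.2 * z.1.2) := by
      rw [mul_one, ← mul_assoc, ← e]
    exact mul_left_cancel this
  have e3 : x.1.2 * y.1.2 ≠ x.1.2 * y.1.2 * z.1.2 := by
    intro e
    apply h3
    have : x.1.2 * y.1.2 * 1 = x.1.2 * y.1.2 * z.1.2 := by rw [mul_one, ← e]
    exact mul_left_cancel this
  have hcard : ({1, x.1.2, x.1.2 * y.1.2, x.1.2 * y.1.2 * z.1.2} :
      Finset G).card = 4 := by
    rw [Finset.card_insert_of_notMem (by
        simp only [Finset.mem_insert, Finset.mem_singleton, not_or]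
        exact ⟨fun e => h1 e, fun e => h4 e, fun e => h6 e⟩),
      Finset.card_insert_of_notMem (by
        simp only [Finset.mem_insert, Finset.mem_singleton, not_or]
        exact ⟨e1, e2⟩),
      Finset.card_insert_of_notMem (by
        simpa using e3),
      Finset.card_singleton]
  have := Finset.card_le_card hsub
  omega

set_option maxHeartbeats 1000000 in
/-- `E` with the above multiplication is an associative semigroup. -/
theorem Emul_assoc (σ : G → G → A) (hσ : IsPreCocycle σ) (I : Set (BR G))
    (hI : IsIdeal I) (hN : N3 G ⊆ I) (hne : I ≠ Set.univ)
    (a b c : Esg A G I) :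
    Emul σ I (Emul σ I a b) c = Emul σ I a (Emul σ I b c) := by
  rcases a with _ | ⟨a, x⟩
  · rcases b with _ | b <;> rcases c with _ | c <;> rfl
  rcases b with _ | ⟨b, y⟩
  · rcases c with _ | c <;> rfl
  rcases c with _ | ⟨c, z⟩
  · have hz : ∀ u : Esg A G I, Emul σ I u none = none := by
      rintro (_ | u) <;> rfl
    simp only [hz]
    rfl
  dsimp only [Emul, Esg]
  by_cases h1 : x.1 * y.1 ∈ I
  · rw [dif_pos h1]
    by_cases h2 : y.1 * z.1 ∈ I
    · rw [dif_pos h2]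
    · rw [dif_neg h2]
      have h3 : x.1 * (y.1 * z.1) ∈ I := by
        rw [← br_assoc]; exact ((hI _ h1) z.1).2
      show (none : Esg A G I) = _
      dsimp only [Emul, Esg]
      rw [dif_pos h3]
  · rw [dif_neg h1]
    by_cases h2 : y.1 * z.1 ∈ I
    · rw [dif_pos h2]
      have h3 : x.1 * y.1 * z.1 ∈ I := by
        rw [br_assoc]; exact ((hI _ h2) x.1).1
      show _ = (none : Esg A G I)
      dsimp only [Emul, Esg]
      rw [dif_pos h3]
    · rw [dif_neg h2]
      dsimp only [Emul, Esg]
      by_cases h3 : x.1 * y.1 * z.1 ∈ I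
      · rw [dif_pos h3]
        have h4 : x.1 * (y.1 * z.1) ∈ I := by rw [← br_assoc]; exact h3
        rw [dif_pos h4]
      · rw [dif_neg h3]
        have h4 : ¬ x.1 * (y.1 * z.1) ∈ I := by rw [← br_assoc]; exact h3
        rw [dif_neg h4]
        have hcard : ((x.1 * y.1 * z.1).1.1).card ≤ 3 := by
          by_contra hc
          exact h3 (hN (by simpa [N3] using (by omega : 4 ≤ ((x.1 * y.1 * z.1).1.1).card)))
        have h0 := hσ x.1.1.2 y.1.1.2 z.1.1.2 (one_mem_of_card_le _ _ _ hcard)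
        have hσeq : σ x.1.1.2 (y.1.1.2 * z.1.1.2) =
            σ (x.1.1.2 * y.1.1.2) z.1.1.2 + σ x.1.1.2 y.1.1.2 -
              σ y.1.1.2 z.1.1.2 := by
          rw [← sub_eq_zero, ← h0, d2]
          abel
        refine congrArg some (Prod.ext ?_ ?_)
        · show a + b + σ x.1.1.2 y.1.1.2 + c +
            σ (x.1 * y.1).1.2 z.1.1.2 = _
          rw [br_snd]
          show _ = a + (b + c + σ y.1.1.2 z.1.1.2) +
            σ x.1.1.2 (y.1 * z.1).1.2
          rw [br_snd, hσeq]
          abel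
        · exact Subtype.ext (br_assoc x.1 y.1 z.1)
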